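/- Let A be a finite lattice whose join-irreducible elements can be listed p₁, …, p_n so that pᵢ D pⱼ implies i > j (no D-cycles, i.e., A satisfies (T∨)). Let B be a lattice with zero and let ξ : A∖{0} → B be an antitone map. Then the adjustment sequence of ξ stabilizes after at most n+1 steps: ξ⁽ⁿ⁾ = ξ⁽ⁿ⁺¹⁾. -/

import Mathlib

/-- The set of candidate values `⋀ξ[S]`, for `S` a nonempty finite subset of `A∖{0}` with
`x ≤ ⋁S`; the one-step adjustment `ξ⁽¹⁾(x)` is the join (least upper bound) of this set. -/
def adjSet {α β : Type*} [Lattice α] [OrderBot α] [Lattice β] [OrderBot β]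
    (ξ : {a : α // a ≠ ⊥} → β) (x : {a : α // a ≠ ⊥}) : Set β :=
  {c | ∃ (S : Finset {a : α // a ≠ ⊥}) (hS : S.Nonempty),
      x.1 ≤ S.sup' hS (fun s => s.1) ∧ c = S.inf' hS ξ}

/-- If a finite lattice `A` satisfies `(T∨)` — its join-irreducibles can be listed
`p 0, …, p (n-1)` so that `p i D p j` implies `i > j` — then for every lattice `B` with
zero and every antitone map `ξ : A∖{0} → B`, the adjustment sequence of `ξ` stabilizes:
`ξ⁽ⁿ⁾ = ξ⁽ⁿ⁺¹⁾`. -/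
theorem stmt17 {α β : Type*} [Lattice α] [Fintype α] [OrderBot α] [Lattice β] [OrderBot β]
    (n : ℕ) (p : Fin n → α) (hinj : Function.Injective p)
    (hirr : ∀ i, SupIrred (p i)) (hall : ∀ q : α, SupIrred q → ∃ i, q = p i)
    (pstar : Fin n → α) (hcov : ∀ i, pstar i ⋖ p i)
    (hstar : ∀ i, ∀ x : α, x < p i → x ≤ pstar i)
    (hT : ∀ i j : Fin n, p i ≠ p j →
      (∃ x : α, p i ≤ p j ⊔ x ∧ ¬ p i ≤ pstar j ⊔ x) → (j : ℕ) < (i : ℕ))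
    (ξ : ℕ → ({a : α // a ≠ ⊥} → β)) (hanti : Antitone (ξ 0))
    (hadj : ∀ (k : ℕ) (x : {a : α // a ≠ ⊥}), IsLUB (adjSet (ξ k) x) (ξ (k + 1) x)) :
    ξ n = ξ (n + 1) := by
  classical
  -- every member of the adjustment sequence is antitone
  have hantiK : ∀ k, Antitone (ξ k) := by
    intro k
    cases k with
    | zero => exact hanti
    | succ k =>
      intro x y hxy
      refine (hadj k y).mono (hadj k x) ?_
      rintro c ⟨S, hS, hle, rfl⟩
      exact ⟨S, hS, le_trans (show x.1 ≤ y.1 from hxy) hle, rfl⟩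
  -- the adjustment sequence is pointwise increasing
  have hmono : ∀ k x, ξ k x ≤ ξ (k + 1) x := by
    intro k x
    exact (hadj k x).1 ⟨{x}, ⟨x, Finset.mem_singleton_self x⟩, by simp, by simp⟩
  -- a weight function used for well-founded replacement
  set N : ℕ := Fintype.card α + 1 with hN
  have hN1 : 1 ≤ N := by omega
  set h : {a : α // a ≠ ⊥} → ℕ :=
    fun q => (Finset.univ.filter (fun a => a ≤ q.1)).card with hh
  have hpos : ∀ q, 1 ≤ h q := by
    intro q
    refine Finset.card_pos.2 ⟨q.1, ?_⟩
    simp [hh]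
  have hlt : ∀ {r q : {a : α // a ≠ ⊥}}, r.1 < q.1 → h r < h q := by
    intro r q hrq
    apply Finset.card_lt_card
    refine (Finset.ssubset_iff_of_subset ?_).2 ⟨q.1, ?_, ?_⟩
    · intro a ha
      simp only [Finset.mem_filter, Finset.mem_univ, true_and] at ha ⊢
      exact ha.trans hrq.le
    · simp
    · simp only [Finset.mem_filter, Finset.mem_univ, true_and]
      exact fun hle => absurd hle (not_le_of_gt hrq)
  set μ : Finset {a : α // a ≠ ⊥} → ℕ := fun S => S.sum (fun q => N ^ h q) with hμdef
  -- decomposition of any element into sup-irreducibles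
  have decomp : ∀ a : α, ∃ T : Finset {a : α // a ≠ ⊥},
      (∀ t ∈ T, SupIrred t.1) ∧ T.sup (fun t => t.1) = a := by
    intro a
    obtain ⟨s, hsup, hsirr⟩ := exists_supIrred_decomposition a
    refine ⟨s.attach.map ⟨fun b => ⟨b.1, (hsirr b.2).ne_bot⟩, ?_⟩, ?_, ?_⟩
    · intro b c hbc
      have h1 : b.1 = c.1 := by have := congrArg (fun z : {a : α // a ≠ ⊥} => z.1) hbc; exact this
      exact Subtype.ext h1
    · intro t ht
      simp only [Finset.mem_map, Function.Embedding.coeFn_mk] at ht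
      obtain ⟨b, hb, rfl⟩ := ht
      exact hsirr b.2
    · rw [Finset.sup_map]
      exact (Finset.sup_attach s id).trans hsup
  -- refinement: any candidate set can be refined to one consisting of sup-irreducibles
  have refine5 : ∀ (g : {a : α // a ≠ ⊥} → β), Antitone g →
      ∀ (x : α) (S : Finset {a : α // a ≠ ⊥}) (hS : S.Nonempty),
      x ≠ ⊥ → x ≤ S.sup' hS (fun s => s.1) →
      ∃ (S' : Finset {a : α // a ≠ ⊥}) (hS' : S'.Nonempty), (∀ q ∈ S', SupIrred q.1) ∧
        x ≤ S'.sup' hS' (fun s => s.1) ∧ S.inf' hS g ≤ S'.inf' hS' g := by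
    intro g hg x S hS hxne hx
    choose T hT1 hT2 using decomp
    set S' : Finset {a : α // a ≠ ⊥} := S.biUnion (fun s => T s.1) with hS'def
    have hsup : S'.sup (fun s => s.1) = S.sup (fun s => s.1) := by
      rw [hS'def, Finset.sup_biUnion]
      exact Finset.sup_congr rfl (fun s _ => hT2 s.1)
    have hxS' : x ≤ S'.sup (fun s => s.1) := by
      rw [hsup, ← Finset.sup'_eq_sup hS]
      exact hx
    have hS' : S'.Nonempty := by
      rw [Finset.nonempty_iff_ne_empty]
      intro hemp
      rw [hemp, Finset.sup_empty] at hxS'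
      exact hxne (le_bot_iff.1 hxS')
    refine ⟨S', hS', ?_, ?_, ?_⟩
    · intro q hq
      obtain ⟨s, hs, hqT⟩ := Finset.mem_biUnion.1 hq
      exact hT1 _ _ hqT
    · rw [Finset.sup'_eq_sup]
      exact hxS'
    · rw [Finset.le_inf'_iff]
      intro q hq
      obtain ⟨s, hs, hqT⟩ := Finset.mem_biUnion.1 hq
      have hq_le : q ≤ s := by
        have h1 : q.1 ≤ (T s.1).sup (fun t => t.1) := Finset.le_sup hqT
        rw [hT2] at h1
        exact h1
      exact le_trans (Finset.inf'_le g hs) (hg hq_le)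
  -- replacement: a sup-irreducible candidate set for `p i` can be replaced by one
  -- consisting only of `p i` and `p j` with `j < i`
  have replace : ∀ (g : {a : α // a ≠ ⊥} → β), Antitone g → ∀ (i : Fin n) (m : ℕ)
      (S : Finset {a : α // a ≠ ⊥}) (hS : S.Nonempty),
      μ S ≤ m → (∀ q ∈ S, SupIrred q.1) → p i ≤ S.sup' hS (fun s => s.1) →
      ∃ (S' : Finset {a : α // a ≠ ⊥}) (hS' : S'.Nonempty),
        (∀ q ∈ S', q.1 = p i ∨ ∃ j : Fin n, (j : ℕ) < (i : ℕ) ∧ q.1 = p j) ∧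
        p i ≤ S'.sup' hS' (fun s => s.1) ∧ S.inf' hS g ≤ S'.inf' hS' g := by
    intro g hg i m
    induction m with
    | zero =>
      intro S hS hμ _ _
      exfalso
      obtain ⟨q, hq⟩ := hS
      have h1 : N ^ h q ≤ μ S := by
        simp only [hμdef]
        exact Finset.single_le_sum (f := fun r => N ^ h r) (fun r _ => Nat.zero_le _) hq
      have h2 : 1 ≤ N ^ h q := Nat.one_le_pow _ _ (by omega)
      omega
    | succ m IH =>
      intro S hS hμ hSirr hcover
      by_cases hgood : ∀ q ∈ S, q.1 = p i ∨ ∃ j : Fin n, (j : ℕ) < (i : ℕ) ∧ q.1 = p j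
      · exact ⟨S, hS, hgood, hcover, le_rfl⟩
      · push_neg at hgood
        obtain ⟨q, hqS, hbad1, hbad2⟩ := hgood
        obtain ⟨j, hj⟩ := hall q.1 (hSirr q hqS)
        have hne : p i ≠ p j := fun he => hbad1 (hj.trans he.symm)
        have hnd : ¬∃ x : α, p i ≤ p j ⊔ x ∧ ¬ p i ≤ pstar j ⊔ x := by
          intro hx
          exact hbad2 j (hT i j hne hx) hj
        push_neg at hnd
        set x₀ : α := (S.erase q).sup (fun s => s.1) with hx₀
        have hsupS : S.sup (fun s => s.1) = q.1 ⊔ x₀ := by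
          conv_lhs => rw [← Finset.insert_erase hqS]
          rw [Finset.sup_insert]
        have h1 : p i ≤ p j ⊔ x₀ := by
          rw [← hj, ← hsupS, ← Finset.sup'_eq_sup hS]
          exact hcover
        have h2 : p i ≤ pstar j ⊔ x₀ := hnd x₀ h1
        obtain ⟨T, hTirr, hTsup⟩ := decomp (pstar j)
        set S' : Finset {a : α // a ≠ ⊥} := S.erase q ∪ T with hS'def
        have hS'sup : S'.sup (fun s => s.1) = x₀ ⊔ pstar j := by
          rw [hS'def, Finset.sup_union, hTsup]
        have hcov' : p i ≤ S'.sup (fun s => s.1) := by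
          rw [hS'sup, sup_comm]
          exact h2
        have hS'ne : S'.Nonempty := by
          rw [Finset.nonempty_iff_ne_empty]
          intro hemp
          rw [hemp, Finset.sup_empty] at hcov'
          exact (hirr i).ne_bot (le_bot_iff.1 hcov')
        have hS'irr : ∀ r ∈ S', SupIrred r.1 := by
          intro r hr
          rcases Finset.mem_union.1 hr with hr | hr
          · exact hSirr r (Finset.mem_of_mem_erase hr)
          · exact hTirr r hr
        have hrq : ∀ r ∈ T, r.1 < q.1 := by
          intro r hr
          have h3 : r.1 ≤ pstar j := by
            have := Finset.le_sup (f := fun t : {a : α // a ≠ ⊥} => t.1) hr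
            rwa [hTsup] at this
          rw [hj]
          exact lt_of_le_of_lt h3 (hcov j).lt
        have hmeet : S.inf' hS g ≤ S'.inf' hS'ne g := by
          rw [Finset.le_inf'_iff]
          intro r hr
          rcases Finset.mem_union.1 hr with hr | hr
          · exact Finset.inf'_le g (Finset.mem_of_mem_erase hr)
          · exact le_trans (Finset.inf'_le g hqS) (hg (le_of_lt (hrq r hr)))
        -- the weight strictly decreases
        have hμT : μ T < N ^ h q := by
          have hTle : ∀ r ∈ T, N ^ h r ≤ N ^ (h q - 1) := by
            intro r hr
            exact Nat.pow_le_pow_right (by omega)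
              (by have := hlt (hrq r hr); omega)
          have hcard : T.card ≤ Fintype.card α := by
            have := Finset.card_le_univ (T.image Subtype.val)
            rwa [Finset.card_image_of_injective T Subtype.val_injective] at this
          calc μ T ≤ T.card * N ^ (h q - 1) := by
                simpa [hμdef] using Finset.sum_le_card_nsmul T _ _ hTle
            _ ≤ Fintype.card α * N ^ (h q - 1) :=
                Nat.mul_le_mul_right _ hcard
            _ < N * N ^ (h q - 1) := by
                have hp : 0 < N ^ (h q - 1) := pow_pos (by omega) _
                have hc : Fintype.card α < N := by omega
                calc Fintype.card α * N ^ (h q - 1)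
                    < N * N ^ (h q - 1) := by
                      exact Nat.mul_lt_mul_of_lt_of_le hc le_rfl hp
                  _ = N * N ^ (h q - 1) := rfl
            _ = N ^ (h q) := by
                have he : h q - 1 + 1 = h q := by have := hpos q; omega
                rw [← pow_succ', he]
        have hμS : μ (S.erase q) + N ^ h q = μ S := by
          simpa [hμdef] using Finset.sum_erase_add S (fun r => N ^ h r) hqS
        have hμS' : μ S' ≤ μ (S.erase q) + μ T := by
          calc μ S' = (S.erase q ∪ T).sum (fun r => N ^ h r) := by
                rw [hμdef, hS'def]
            _ = (S.erase q).sum (fun r => N ^ h r)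
                + ((T \ S.erase q)).sum (fun r => N ^ h r) := by
                rw [← Finset.sum_union (Finset.disjoint_sdiff)]
                congr 1
                rw [Finset.union_sdiff_self_eq_union]
            _ ≤ μ (S.erase q) + μ T :=
                Nat.add_le_add_left
                  (Finset.sum_le_sum_of_subset (Finset.sdiff_subset)) _
        have hμ' : μ S' ≤ m := by omega
        obtain ⟨S'', hS'', hgood'', hcov'', hinf''⟩ :=
          IH S' hS'ne hμ' hS'irr (by rw [Finset.sup'_eq_sup]; exact hcov')
        exact ⟨S'', hS'', hgood'', hcov'', le_trans hmeet hinf''⟩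
  -- the sequence freezes at `p i` from step `i` on (strong induction on `i`)
  have freeze : ∀ (M : ℕ) (i : Fin n), (i : ℕ) < M → ∀ k, (i : ℕ) ≤ k →
      ξ (k + 1) ⟨p i, (hirr i).ne_bot⟩ ≤ ξ k ⟨p i, (hirr i).ne_bot⟩ := by
    intro M
    induction M with
    | zero => intro i hi; exact absurd hi (Nat.not_lt_zero _)
    | succ M IH =>
      intro i hi k hk
      set Pi : {a : α // a ≠ ⊥} := ⟨p i, (hirr i).ne_bot⟩ with hPi
      refine (hadj k Pi).2 ?_
      rintro c ⟨S, hS, hcover, rfl⟩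
      obtain ⟨S1, hS1, hirr1, hcov1, hle1⟩ :=
        refine5 (ξ k) (hantiK k) (p i) S hS (hirr i).ne_bot hcover
      obtain ⟨S2, hS2, hgood2, hcov2, hle2⟩ :=
        replace (ξ k) (hantiK k) i (μ S1) S1 hS1 le_rfl hirr1 hcov1
      by_cases hpi : ∃ q ∈ S2, q.1 = p i
      · obtain ⟨q, hqS2, hq⟩ := hpi
        have hqPi : q = Pi := Subtype.ext hq
        calc S.inf' hS (ξ k) ≤ S2.inf' hS2 (ξ k) := le_trans hle1 hle2
          _ ≤ ξ k q := Finset.inf'_le _ hqS2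
          _ = ξ k Pi := by rw [hqPi]
      · -- all elements of S2 are p j with j < i; hence i ≥ 1 and k ≥ 1
        have hall2 : ∀ q ∈ S2, ∃ j : Fin n, (j : ℕ) < (i : ℕ) ∧ q.1 = p j := by
          intro q hq
          rcases hgood2 q hq with hq' | hq'
          · exact absurd ⟨q, hq, hq'⟩ hpi
          · exact hq'
        obtain ⟨q0, hq0⟩ := id hS2
        obtain ⟨j0, hj0, _⟩ := hall2 q0 hq0
        have hk1 : 1 ≤ k := by omega
        obtain ⟨m, rfl⟩ : ∃ m, k = m + 1 := ⟨k - 1, by omega⟩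
        have hfr : S2.inf' hS2 (ξ (m + 1)) = S2.inf' hS2 (ξ m) := by
          refine Finset.inf'_congr hS2 rfl ?_
          intro q hq
          obtain ⟨j, hjlt, hqj⟩ := hall2 q hq
          have hqj' : q = ⟨p j, (hirr j).ne_bot⟩ := Subtype.ext hqj
          rw [hqj']
          exact le_antisymm (IH j (by omega) m (by omega)) (hmono m _)
        calc S.inf' hS (ξ (m + 1)) ≤ S2.inf' hS2 (ξ (m + 1)) := le_trans hle1 hle2
          _ = S2.inf' hS2 (ξ m) := hfr
          _ ≤ ξ (m + 1) Pi := (hadj m Pi).1 ⟨S2, hS2, hcov2, rfl⟩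
  -- conclusion
  funext x
  refine le_antisymm (hmono n x) ?_
  refine (hadj n x).2 ?_
  rintro c ⟨S, hS, hcover, rfl⟩
  obtain ⟨S1, hS1, hirr1, hcov1, hle1⟩ :=
    refine5 (ξ n) (hantiK n) x.1 S hS x.2 hcover
  obtain ⟨q0, hq0⟩ := id hS1
  obtain ⟨j0, hj0⟩ := hall q0.1 (hirr1 q0 hq0)
  have hn1 : 1 ≤ n := by have := j0.2; omega
  obtain ⟨m, rfl⟩ : ∃ m, n = m + 1 := ⟨n - 1, by omega⟩
  have hfr : S1.inf' hS1 (ξ (m + 1)) = S1.inf' hS1 (ξ m) := by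
    refine Finset.inf'_congr hS1 rfl ?_
    intro q hq
    obtain ⟨j, hj⟩ := hall q.1 (hirr1 q hq)
    have hqj' : q = ⟨p j, (hirr j).ne_bot⟩ := Subtype.ext hj
    rw [hqj']
    have hjm : (j : ℕ) ≤ m := by have := j.2; omega
    exact le_antisymm (freeze (m + 1) j (by omega) m hjm) (hmono m _)
  calc S.inf' hS (ξ (m + 1)) ≤ S1.inf' hS1 (ξ (m + 1)) := hle1
    _ = S1.inf' hS1 (ξ m) := hfr
    _ ≤ ξ (m + 1) x := (hadj m x).1 ⟨S1, hS1, hcov1, rfl⟩
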